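/- Let g:X→ℝ³ be a C¹ cooperative vector field on an open convex set X⊆ℝ³ (all off-diagonal entries of the Jacobian are nonnegative), and let ζ,ξ:[0,a]→X solve ζ'=g(ζ), ξ'=g(ξ). If ζ(0) ≤ ξ(0) componentwise, then ζ(t) ≤ ξ(t) componentwise for all t∈[0,a]. -/

import Mathlib

open Set Filter Topology
open Metric

lemma coop_quasimono {X : Set (Fin 3 → ℝ)} {g : (Fin 3 → ℝ) → (Fin 3 → ℝ)}
    (hX : IsOpen X) (hg : ContDiffOn ℝ 1 g X)
    (hcoop : ∀ x ∈ X, ∀ i j : Fin 3, i ≠ j →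
      0 ≤ fderiv ℝ (fun y => g y i) x (Pi.single j 1))
    {x y : Fin 3 → ℝ} (hseg : segment ℝ x y ⊆ X) (hle : ∀ j, x j ≤ y j)
    {i : Fin 3} (hi : x i = y i) : g x i ≤ g y i := by
  set p : ℝ → (Fin 3 → ℝ) := fun s => x + s • (y - x) with hp
  have hmem : ∀ s ∈ Icc (0:ℝ) 1, p s ∈ X := by
    intro s hs
    apply hseg
    rw [segment_eq_image']
    exact mem_image_of_mem _ hs
  have hdiff : ∀ s ∈ Icc (0:ℝ) 1,
      HasDerivAt (fun u => g (p u) i) ((fderiv ℝ (fun w => g w i) (p s)) (y - x)) s := by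
    intro s hs
    have hgd : DifferentiableAt ℝ g (p s) :=
      (hg.differentiableOn one_ne_zero).differentiableAt (hX.mem_nhds (hmem s hs))
    have hgi : DifferentiableAt ℝ (fun w => g w i) (p s) := by
      change DifferentiableAt ℝ ((fun v : Fin 3 → ℝ => v i) ∘ g) (p s)
      exact (ContinuousLinearMap.proj i : (Fin 3 → ℝ) →L[ℝ] ℝ).differentiableAt.comp _ hgd
    have hps : HasDerivAt p (y - x) s := by
      have h1 : HasDerivAt (fun u : ℝ => u • (y - x)) ((1:ℝ) • (y - x)) s :=
        (hasDerivAt_id s).smul_const (y - x)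
      simpa [hp] using h1.const_add x
    exact hgi.hasFDerivAt.comp_hasDerivAt s hps
  have hnn : ∀ s ∈ Icc (0:ℝ) 1, 0 ≤ (fderiv ℝ (fun w => g w i) (p s)) (y - x) := by
    intro s hs
    have hXs := hmem s hs
    have hdecomp : (y - x) = ∑ j : Fin 3, (y j - x j) • (Pi.single j (1:ℝ) : Fin 3 → ℝ) := by
      funext k
      simp [Finset.sum_apply, Pi.single_apply, eq_comm]
    rw [hdecomp, map_sum]
    refine Finset.sum_nonneg fun j _ => ?_
    rw [map_smul]
    rcases eq_or_ne j i with rfl | hj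
    · have h0 : y j - x j = 0 := by rw [hi]; ring
      simp [h0]
    · exact smul_nonneg (sub_nonneg.2 (hle j)) (hcoop _ hXs i j (Ne.symm hj))
  have hcont : ContinuousOn (fun u => g (p u) i) (Icc 0 1) :=
    fun s hs => (hdiff s hs).continuousAt.continuousWithinAt
  have hmono := monotoneOn_of_deriv_nonneg (convex_Icc (0:ℝ) 1) hcont
    (fun s hs => by
      rw [interior_Icc] at hs
      exact ((hdiff s (Ioo_subset_Icc_self hs)).differentiableAt).differentiableWithinAt)
    (fun s hs => by
      rw [interior_Icc] at hs
      rw [(hdiff s (Ioo_subset_Icc_self hs)).deriv]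
      exact hnn s (Ioo_subset_Icc_self hs))
  have h01 := hmono (left_mem_Icc.2 zero_le_one) (right_mem_Icc.2 zero_le_one) zero_le_one
  simpa [hp] using h01


theorem stmt12 (X : Set (Fin 3 → ℝ)) (g : (Fin 3 → ℝ) → (Fin 3 → ℝ)) (a : ℝ)
    (ζ ξ : ℝ → Fin 3 → ℝ)
    (hX : IsOpen X) (hconv : Convex ℝ X)
    (hg : ContDiffOn ℝ 1 g X)
    (hcoop : ∀ x ∈ X, ∀ i j : Fin 3, i ≠ j →
      0 ≤ fderiv ℝ (fun y => g y i) x (Pi.single j 1))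
    (ha : 0 < a)
    (hζX : ∀ t ∈ Icc (0 : ℝ) a, ζ t ∈ X)
    (hξX : ∀ t ∈ Icc (0 : ℝ) a, ξ t ∈ X)
    (hζ : ∀ t ∈ Icc (0 : ℝ) a, HasDerivAt ζ (g (ζ t)) t)
    (hξ : ∀ t ∈ Icc (0 : ℝ) a, HasDerivAt ξ (g (ξ t)) t)
    (h0 : ∀ i, ζ 0 i ≤ ξ 0 i) :
    ∀ t ∈ Icc (0 : ℝ) a, ∀ i, ζ t i ≤ ξ t i := by
  have hζc : ContinuousOn ζ (Icc 0 a) := fun t ht => (hζ t ht).continuousAt.continuousWithinAt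
  have hξc : ContinuousOn ξ (Icc 0 a) := fun t ht => (hξ t ht).continuousAt.continuousWithinAt
  set F : ℝ × ℝ → (Fin 3 → ℝ) := fun q => (1 - q.1) • ζ q.2 + q.1 • ξ q.2 with hF
  set K1 : Set (Fin 3 → ℝ) := F '' ((Icc 0 1) ×ˢ (Icc 0 a)) with hK1def
  have hK1c : IsCompact K1 := by
    apply (isCompact_Icc.prod isCompact_Icc).image_of_continuousOn
    apply ContinuousOn.add
    · exact (continuousOn_const.sub continuousOn_fst).smul
        (hζc.comp continuousOn_snd (fun q hq => hq.2))
    · exact continuousOn_fst.smul (hξc.comp continuousOn_snd (fun q hq => hq.2))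
  have hK1X : K1 ⊆ X := by
    rintro _ ⟨⟨s, t⟩, ⟨hs, ht⟩, rfl⟩
    exact hconv (hζX t ht) (hξX t ht) (by linarith [hs.2]) hs.1 (by ring)
  have hζK1 : ∀ t ∈ Icc (0:ℝ) a, ζ t ∈ K1 := by
    intro t ht
    exact ⟨(0, t), ⟨left_mem_Icc.2 zero_le_one, ht⟩, by simp [hF]⟩
  have hξK1 : ∀ t ∈ Icc (0:ℝ) a, ξ t ∈ K1 := by
    intro t ht
    exact ⟨(1, t), ⟨right_mem_Icc.2 zero_le_one, ht⟩, by simp [hF]⟩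
  obtain ⟨δ₀, hδ₀, hth⟩ := hK1c.exists_thickening_subset_open hX hK1X
  set ρ := δ₀ / 2 with hρdef
  have hρ : 0 < ρ := by positivity
  set K2 := cthickening ρ K1 with hK2def
  have hK2X : K2 ⊆ X :=
    (cthickening_subset_thickening' hδ₀ (by simp [hρdef]; linarith) K1).trans hth
  have hK2c : IsCompact K2 := hK1c.cthickening
  obtain ⟨C, hC⟩ := hK2c.exists_bound_of_continuousOn
    ((hg.continuousOn_fderiv_of_isOpen hX le_rfl).mono hK2X)
  set K := max C 0 with hKdef
  have hK0 : 0 ≤ K := le_max_right _ _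
  set d : Fin 3 → ℝ → ℝ := fun i t => ζ t i - ξ t i with hd
  set dp : Fin 3 → ℝ → ℝ := fun i t => max (d i t) 0 with hdp
  set φ : ℝ → ℝ := fun t => max (dp 0 t) (max (dp 1 t) (max (dp 2 t) 0)) with hφ
  have hφ0 : ∀ t, 0 ≤ φ t := fun t =>
    le_max_of_le_right (le_max_of_le_right (le_max_right _ _))
  have hdpφ : ∀ (i : Fin 3) t, dp i t ≤ φ t := by
    intro i t
    fin_cases i
    · exact le_max_left _ _
    · exact le_max_of_le_right (le_max_left _ _)
    · exact le_max_of_le_right (le_max_of_le_right (le_max_left _ _))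
  have hdφ : ∀ (i : Fin 3) t, d i t ≤ φ t := fun i t => (le_max_left _ _).trans (hdpφ i t)
  have hφcont : ContinuousOn φ (Icc 0 a) := by
    have hdc : ∀ i : Fin 3, ContinuousOn (d i) (Icc 0 a) := fun i =>
      ((continuous_apply i).comp_continuousOn hζc).sub
        ((continuous_apply i).comp_continuousOn hξc)
    have hdpc : ∀ i : Fin 3, ContinuousOn (dp i) (Icc 0 a) := fun i =>
      (hdc i).sup' continuousOn_const
    exact (hdpc 0).sup' ((hdpc 1).sup' ((hdpc 2).sup' continuousOn_const))
  -- key derivative estimate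
  have key : ∀ t ∈ Icc (0:ℝ) a, φ t ≤ ρ → ∀ i, d i t = φ t →
      g (ζ t) i - g (ξ t) i ≤ K * φ t := by
    intro t ht htρ i hit
    have hv0 : 0 ≤ φ t := hφ0 t
    set one : Fin 3 → ℝ := fun _ => (1:ℝ) with hone
    have hnorm_one : ‖one‖ = 1 := by rw [hone, pi_norm_const]; simp
    set x' : Fin 3 → ℝ := ζ t - φ t • one with hx'
    have hζK2 : ζ t ∈ K2 := self_subset_cthickening _ (hζK1 t ht)
    have hseg1 : segment ℝ x' (ξ t) ⊆ K2 := by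
      intro z hz
      rw [segment_eq_image'] at hz
      obtain ⟨θ, hθ, rfl⟩ := hz
      refine mem_cthickening_of_dist_le _ (F (θ, t)) _ _ ⟨(θ, t), ⟨hθ, ht⟩, rfl⟩ ?_
      have heq2 : x' + θ • (ξ t - x') - F (θ, t) = (-((1 - θ) * φ t)) • one := by
        simp only [hx', hF]
        module
      rw [dist_eq_norm, heq2, norm_smul, hnorm_one, mul_one, Real.norm_eq_abs,
        abs_of_nonpos (by nlinarith [hθ.1, hθ.2])]
      nlinarith [hθ.1, hθ.2]
    have hseg2 : segment ℝ x' (ζ t) ⊆ K2 := by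
      intro z hz
      rw [segment_eq_image'] at hz
      obtain ⟨θ, hθ, rfl⟩ := hz
      refine mem_cthickening_of_dist_le _ (ζ t) _ _ (hζK1 t ht) ?_
      have heq2 : x' + θ • (ζ t - x') - ζ t = (-((1 - θ) * φ t)) • one := by
        simp only [hx']; module
      rw [dist_eq_norm, heq2, norm_smul, hnorm_one, mul_one, Real.norm_eq_abs,
        abs_of_nonpos (by nlinarith [hθ.1, hθ.2])]
      nlinarith [hθ.1, hθ.2]
    have hq : g x' i ≤ g (ξ t) i := by
      apply coop_quasimono hX hg hcoop (hseg1.trans hK2X)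
      · intro j
        have h2 := hdφ j t
        simp only [hd] at h2
        simp only [hx', hone, Pi.sub_apply, Pi.smul_apply, smul_eq_mul, mul_one]
        linarith
      · simp only [hx', hone, Pi.sub_apply, Pi.smul_apply, smul_eq_mul, mul_one]
        simp only [hd] at hit
        linarith
    have hlip : ‖g (ζ t) - g x'‖ ≤ C * ‖ζ t - x'‖ := by
      apply Convex.norm_image_sub_le_of_norm_hasFDerivWithin_le
        (f' := fun z => fderiv ℝ g z) (fun z hz =>
          (((hg.differentiableOn one_ne_zero).differentiableAt
            (hX.mem_nhds (hK2X (hseg2 hz)))).hasFDerivAt).hasFDerivWithinAt)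
        (fun z hz => hC z (hseg2 hz)) (convex_segment _ _)
        (left_mem_segment ℝ _ _) (right_mem_segment ℝ _ _)
    have hnormv : ‖ζ t - x'‖ = φ t := by
      have h3 : ζ t - x' = φ t • one := by simp only [hx']; module
      rw [h3, norm_smul, hnorm_one, mul_one, Real.norm_eq_abs, abs_of_nonneg hv0]
    have hcomp : g (ζ t) i - g x' i ≤ C * φ t := by
      have h1 : |g (ζ t) i - g x' i| ≤ ‖g (ζ t) - g x'‖ := by
        have h4 := norm_le_pi_norm (g (ζ t) - g x') i
        simpa [Real.norm_eq_abs] using h4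
      rw [hnormv] at hlip
      calc g (ζ t) i - g x' i ≤ |g (ζ t) i - g x' i| := le_abs_self _
        _ ≤ C * φ t := h1.trans hlip
    have hCK : C * φ t ≤ K * φ t :=
      mul_le_mul_of_nonneg_right (le_max_left _ _) hv0
    linarith
  -- Gronwall step
  have gron : ∀ c dd : ℝ, c ∈ Icc 0 a → dd ∈ Icc c a → φ c = 0 →
      (∀ z ∈ Icc c dd, φ z ≤ ρ) → φ dd ≤ 0 := by
    intro c dd hc hdd hφc hbnd
    have hsub : Icc c dd ⊆ Icc 0 a := Icc_subset_Icc hc.1 hdd.2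
    have hslope : ∀ x ∈ Ico c dd, ∀ r, K * φ x < r →
        ∃ᶠ z in 𝓝[>] x, (z - x)⁻¹ * (φ z - φ x) < r := by
      intro x hx r hr
      have hxa : x ∈ Icc 0 a := hsub (Ico_subset_Icc_self hx)
      have hxρ : φ x ≤ ρ := hbnd x (Ico_subset_Icc_self hx)
      apply Filter.Eventually.frequently
      set r' := (K * φ x + r)/2 with hr'def
      have h1 : K * φ x < r' := by rw [hr'def]; linarith
      have h2 : r' < r := by rw [hr'def]; linarith
      have hr'0 : 0 < r' := lt_of_le_of_lt (mul_nonneg hK0 (hφ0 x)) h1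
      have hcomp : ∀ i : Fin 3, ∀ᶠ z in 𝓝[>] x, dp i z ≤ φ x + (z - x) * r' := by
        intro i
        rcases lt_or_eq_of_le (hdφ i x) with hlt | heq
        · have hcont : ContinuousAt (d i) x := by
            have hc1 := (hζ x hxa).continuousAt
            have hc2 := (hξ x hxa).continuousAt
            exact ((continuous_apply i).continuousAt.comp hc1).sub
              ((continuous_apply i).continuousAt.comp hc2)
          have hev : ∀ᶠ z in 𝓝 x, d i z < φ x := hcont.eventually_lt_const hlt
          filter_upwards [hev.filter_mono nhdsWithin_le_nhds, self_mem_nhdsWithin]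
            with z hz1 hz2
          have hzx : (0:ℝ) < z - x := sub_pos.2 hz2
          have hnn : 0 ≤ (z - x) * r' := mul_nonneg hzx.le hr'0.le
          have h5 := hφ0 x
          exact max_le (by linarith) (by linarith)
        · have hD1 : HasDerivAt (fun t => ζ t i) (g (ζ x) i) x := by
            have h6 := (ContinuousLinearMap.proj i :
              (Fin 3 → ℝ) →L[ℝ] ℝ).hasFDerivAt.comp_hasDerivAt x (hζ x hxa)
            exact h6
          have hD2 : HasDerivAt (fun t => ξ t i) (g (ξ x) i) x := by
            have h6 := (ContinuousLinearMap.proj i :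
              (Fin 3 → ℝ) →L[ℝ] ℝ).hasFDerivAt.comp_hasDerivAt x (hξ x hxa)
            exact h6
          have hDer : HasDerivAt (d i) (g (ζ x) i - g (ξ x) i) x := hD1.sub hD2
          have hDle : g (ζ x) i - g (ξ x) i < r' :=
            lt_of_le_of_lt (key x hxa hxρ i heq) h1
          have htends : Tendsto (slope (d i) x) (𝓝[>] x) (𝓝 (g (ζ x) i - g (ξ x) i)) :=
            (hasDerivAt_iff_tendsto_slope.mp hDer).mono_left
              (nhdsWithin_mono x (fun z hz => ne_of_gt hz))
          filter_upwards [htends.eventually_lt_const hDle, self_mem_nhdsWithin]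
            with z hz1 hz2
          have hzx : (0:ℝ) < z - x := sub_pos.2 hz2
          rw [slope_def_field] at hz1
          have hz3 : d i z < d i x + (z - x) * r' := by
            rw [div_lt_iff₀ hzx] at hz1; linarith
          have hnn : 0 ≤ (z - x) * r' := mul_nonneg hzx.le hr'0.le
          have h5 := hφ0 x
          rw [heq] at hz3
          exact max_le (by linarith) (by linarith)
      filter_upwards [hcomp 0, hcomp 1, hcomp 2, self_mem_nhdsWithin]
        with z hz0 hz1 hz2 hzm
      have hzx : (0:ℝ) < z - x := sub_pos.2 hzm
      have hφz : φ z ≤ φ x + (z - x) * r' := by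
        have h00 : 0 ≤ φ x + (z - x) * r' :=
          add_nonneg (hφ0 x) (mul_nonneg hzx.le hr'0.le)
        exact max_le hz0 (max_le hz1 (max_le hz2 h00))
      have hfin : (z - x)⁻¹ * (φ z - φ x) ≤ r' := by
        rw [inv_mul_le_iff₀ hzx]
        nlinarith
      linarith
    have hmain := le_gronwallBound_of_liminf_deriv_right_le (f := φ)
      (f' := fun x => K * φ x) (δ := 0) (K := K) (ε := 0)
      (hφcont.mono hsub) hslope (le_of_eq hφc)
      (fun x hx => by rw [add_zero])
    have h2 := hmain dd (right_mem_Icc.2 hdd.1)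
    rwa [gronwallBound_ε0, zero_mul] at h2
  -- continuous induction
  set S : Set ℝ := {t | φ t ≤ 0} with hS
  have hclosed : IsClosed (S ∩ Icc 0 a) := by
    have h1 := hφcont.preimage_isClosed_of_isClosed (t := Iic (0:ℝ)) isClosed_Icc isClosed_Iic
    have : S ∩ Icc 0 a = Icc 0 a ∩ φ ⁻¹' (Iic 0) := by
      ext z; simp [hS, and_comm]
    rwa [this]
  have h0S : (0:ℝ) ∈ S := by
    simp only [hS, mem_setOf_eq, hφ, hdp, hd]
    refine max_le ?_ (max_le ?_ (max_le ?_ le_rfl)) <;>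
      exact max_le (sub_nonpos.2 (h0 _)) le_rfl
  have main : Icc 0 a ⊆ S := by
    apply hclosed.Icc_subset_of_forall_exists_gt h0S
    rintro x ⟨hxS, hxI⟩ y hy
    have hφx : φ x = 0 := le_antisymm hxS (hφ0 x)
    have hcw : ContinuousWithinAt φ (Icc 0 a) x := hφcont x (Ico_subset_Icc_self hxI)
    have hev : ∀ᶠ z in 𝓝[Icc 0 a] x, φ z < ρ :=
      hcw.eventually_lt_const (by rw [hφx]; exact hρ)
    rw [eventually_nhdsWithin_iff, Metric.eventually_nhds_iff] at hev
    obtain ⟨ε, hε, hball⟩ := hev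
    set dd := min (x + ε/2) (min y a) with hdddef
    have hxdd : x < dd := by
      apply lt_min (by linarith)
      exact lt_min hy hxI.2
    have hdda : dd ≤ a := (min_le_right _ _).trans (min_le_right _ _)
    have hsub : ∀ z ∈ Icc x dd, φ z ≤ ρ := by
      intro z hz
      have hz0a : z ∈ Icc 0 a := ⟨hxI.1.trans hz.1, hz.2.trans hdda⟩
      refine le_of_lt (hball ?_ hz0a)
      rw [Real.dist_eq, abs_of_nonneg (by linarith [hz.1])]
      have h2 := hz.2.trans (min_le_left _ _)
      linarith
    have hd0 := gron x dd (Ico_subset_Icc_self hxI) ⟨hxdd.le, hdda⟩ hφx hsub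
    exact ⟨dd, hd0, hxdd, (min_le_right _ _).trans (min_le_left _ _)⟩
  intro t ht i
  have hts := main ht
  have h1 := hdφ i t
  simp only [hS, mem_setOf_eq] at hts
  simp only [hd] at h1
  linarith
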